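/- arXiv:0902.1207 — 2 statements merged into one kernel-verified Lean document; each statement's English description precedes it below -/
import Mathlib

section
/- Let A be a real n×n matrix, B a real n×p matrix, and let T_s, S_s be real n×n_s matrices with S_sᵀ T_s = I_{n_s}. Set P_s = T_s S_sᵀ, A_s = S_sᵀ A T_s, and B_s = S_sᵀ B, and assume the function t ↦ exp(t A_s) B_s B_sᵀ exp(t A_sᵀ) is Bochner integrable on [0, ∞) (as holds when every eigenvalue of A_s has negative real part). Then the controllability Gramian of the projected system equals the stable part of the Gramian of the original system pushed forward by T_s: ∫₀^∞ exp(t (P_s A)) (P_s B) (P_s B)ᵀ exp(t (P_s A)ᵀ) dt = T_s ( ∫₀^∞ exp(t A_s) B_s B_sᵀ exp(t A_sᵀ) dt ) T_sᵀ; in particular the left-hand integrand is also integrable on [0, ∞). -/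
open Matrix NormedSpace MeasureTheory

attribute [local instance] Matrix.normedAddCommGroup Matrix.normedSpace

private lemma mat_norm_mul_le {m k l : ℕ} (A : Matrix (Fin m) (Fin k) ℝ)
    (B : Matrix (Fin k) (Fin l) ℝ) : ‖A * B‖ ≤ k * ‖A‖ * ‖B‖ := by
  rw [Matrix.norm_le_iff (by positivity)]
  intro i j
  calc ‖(A * B) i j‖ = ‖∑ x, A i x * B x j‖ := by rw [Matrix.mul_apply]
    _ ≤ ∑ x : Fin k, ‖A i x * B x j‖ := norm_sum_le _ _
    _ ≤ ∑ _x : Fin k, ‖A‖ * ‖B‖ := by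
        refine Finset.sum_le_sum fun x _ => ?_
        rw [norm_mul]
        exact mul_le_mul (A.norm_entry_le_entrywise_sup_norm)
          (B.norm_entry_le_entrywise_sup_norm) (norm_nonneg _) (norm_nonneg _)
    _ = k * ‖A‖ * ‖B‖ := by simp [Finset.sum_const, mul_assoc]

private lemma exp_summable {m : ℕ} (M : Matrix (Fin m) (Fin m) ℝ) :
    Summable (fun k : ℕ => ((Nat.factorial k : ℝ))⁻¹ • M ^ k) := by
  set c : ℝ := m * ‖M‖ + 1 with hc
  have hc0 : 0 ≤ m * ‖M‖ := by positivity
  have hpow : ∀ k : ℕ, ‖M ^ k‖ ≤ c ^ k := by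
    intro k
    induction k with
    | zero =>
      simp only [pow_zero]
      rw [Matrix.norm_le_iff (by norm_num)]
      intro i j
      by_cases h : i = j <;> simp [Matrix.one_apply, h]
    | succ k ih =>
      calc ‖M ^ (k + 1)‖ = ‖M * M ^ k‖ := by rw [pow_succ']
        _ ≤ m * ‖M‖ * ‖M ^ k‖ := mat_norm_mul_le _ _
        _ ≤ c * c ^ k := by
            refine mul_le_mul (by simp [hc]) ih (norm_nonneg _) (by positivity)
        _ = c ^ (k + 1) := by ring
  refine Summable.of_norm_bounded (Real.summable_pow_div_factorial c) fun k => ?_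
  rw [norm_smul, norm_inv, Real.norm_natCast]
  rw [div_eq_inv_mul]
  exact mul_le_mul_of_nonneg_left (hpow k) (by positivity)

private lemma exp_intertwine {a b : ℕ} (C : Matrix (Fin a) (Fin b) ℝ)
    (X : Matrix (Fin b) (Fin b) ℝ) (Y : Matrix (Fin a) (Fin a) ℝ)
    (h : C * X = Y * C) : C * exp X = exp Y * C := by
  have hp : ∀ k : ℕ, C * X ^ k = Y ^ k * C := by
    intro k
    induction k with
    | zero => simp
    | succ k ih =>
      calc C * X ^ (k + 1) = C * X ^ k * X := by rw [pow_succ, Matrix.mul_assoc]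
        _ = Y ^ k * (C * X) := by rw [ih, Matrix.mul_assoc]
        _ = Y ^ k * Y * C := by rw [h, Matrix.mul_assoc]
        _ = Y ^ (k + 1) * C := by rw [pow_succ]
  let L : Matrix (Fin b) (Fin b) ℝ →ₗ[ℝ] Matrix (Fin a) (Fin b) ℝ :=
    { toFun := fun M => C * M
      map_add' := fun x y => Matrix.mul_add _ _ _
      map_smul' := fun r x => (Matrix.mul_smul _ _ _) }
  let R : Matrix (Fin a) (Fin a) ℝ →ₗ[ℝ] Matrix (Fin a) (Fin b) ℝ :=
    { toFun := fun M => M * C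
      map_add' := fun x y => Matrix.add_mul _ _ _
      map_smul' := fun r x => (Matrix.smul_mul _ _ _) }
  have hL := (LinearMap.toContinuousLinearMap L).map_tsum (exp_summable X)
  have hR := (LinearMap.toContinuousLinearMap R).map_tsum (exp_summable Y)
  simp only [LinearMap.coe_toContinuousLinearMap', L, R, LinearMap.coe_mk,
    AddHom.coe_mk] at hL hR
  rw [exp_eq_tsum (𝕂 := ℝ), hL, exp_eq_tsum (𝕂 := ℝ), hR]
  refine tsum_congr fun k => ?_
  rw [Matrix.mul_smul, Matrix.smul_mul, hp k]

/-- The controllability Gramian of the system projected onto the stable subspace via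
`P_s = T_s S_sᵀ` equals the Gramian of the stable sub-system `(A_s, B_s) = (S_sᵀ A T_s, S_sᵀ B)`
pushed forward by `T_s`. -/
theorem projected_controllability_gramian
    {n ns p : ℕ}
    (A : Matrix (Fin n) (Fin n) ℝ) (B : Matrix (Fin n) (Fin p) ℝ)
    (Ts Ss : Matrix (Fin n) (Fin ns) ℝ)
    (hST : Ssᵀ * Ts = 1)
    (hint : @IntegrableOn _ _ _ _ SeminormedAddGroup.toContinuousENorm
      (fun t : ℝ => exp (t • (Ssᵀ * A * Ts)) * (Ssᵀ * B) * (Ssᵀ * B)ᵀ *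
        exp (t • (Ssᵀ * A * Ts)ᵀ))
      (Set.Ioi 0) volume) :
    @IntegrableOn _ _ _ _ SeminormedAddGroup.toContinuousENorm
      (fun t : ℝ => exp (t • (Ts * Ssᵀ * A)) * (Ts * Ssᵀ * B) * (Ts * Ssᵀ * B)ᵀ *
        exp (t • (Ts * Ssᵀ * A)ᵀ))
      (Set.Ioi 0) volume ∧
    (∫ t in Set.Ioi (0:ℝ),
        exp (t • (Ts * Ssᵀ * A)) * (Ts * Ssᵀ * B) * (Ts * Ssᵀ * B)ᵀ *
          exp (t • (Ts * Ssᵀ * A)ᵀ)) =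
      Ts * (∫ t in Set.Ioi (0:ℝ),
        exp (t • (Ssᵀ * A * Ts)) * (Ssᵀ * B) * (Ssᵀ * B)ᵀ *
          exp (t • (Ssᵀ * A * Ts)ᵀ)) * Tsᵀ := by
  -- intertwining relations
  have h1 : ∀ t : ℝ, exp (t • (Ts * Ssᵀ * A)) * Ts = Ts * exp (t • (Ssᵀ * A * Ts)) := by
    intro t
    refine (exp_intertwine Ts _ _ ?_).symm
    rw [Matrix.mul_smul, Matrix.smul_mul]
    congr 1
    simp only [Matrix.mul_assoc]
  have h2 : ∀ t : ℝ, Tsᵀ * exp (t • (Ts * Ssᵀ * A)ᵀ) =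
      exp (t • (Ssᵀ * A * Ts)ᵀ) * Tsᵀ := by
    intro t
    refine exp_intertwine Tsᵀ _ _ ?_
    rw [Matrix.mul_smul, Matrix.smul_mul]
    congr 1
    simp only [Matrix.transpose_mul, Matrix.transpose_transpose, Matrix.mul_assoc]
  have key : ∀ t : ℝ,
      exp (t • (Ts * Ssᵀ * A)) * (Ts * Ssᵀ * B) * (Ts * Ssᵀ * B)ᵀ *
        exp (t • (Ts * Ssᵀ * A)ᵀ) =
      Ts * (exp (t • (Ssᵀ * A * Ts)) * (Ssᵀ * B) * (Ssᵀ * B)ᵀ *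
        exp (t • (Ssᵀ * A * Ts)ᵀ)) * Tsᵀ := by
    intro t
    calc exp (t • (Ts * Ssᵀ * A)) * (Ts * Ssᵀ * B) * (Ts * Ssᵀ * B)ᵀ *
          exp (t • (Ts * Ssᵀ * A)ᵀ)
        = (exp (t • (Ts * Ssᵀ * A)) * Ts) * ((Ssᵀ * B) * (Bᵀ * Ss)) *
            (Tsᵀ * exp (t • (Ts * Ssᵀ * A)ᵀ)) := by
          simp only [Matrix.transpose_mul, Matrix.transpose_transpose, Matrix.mul_assoc]
      _ = (Ts * exp (t • (Ssᵀ * A * Ts))) * ((Ssᵀ * B) * (Bᵀ * Ss)) *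
            (exp (t • (Ssᵀ * A * Ts)ᵀ) * Tsᵀ) := by rw [h1, h2]
      _ = Ts * (exp (t • (Ssᵀ * A * Ts)) * (Ssᵀ * B) * (Ssᵀ * B)ᵀ *
            exp (t • (Ssᵀ * A * Ts)ᵀ)) * Tsᵀ := by
          simp only [Matrix.transpose_mul, Matrix.transpose_transpose, Matrix.mul_assoc]
  have hfun : (fun t : ℝ => exp (t • (Ts * Ssᵀ * A)) * (Ts * Ssᵀ * B) * (Ts * Ssᵀ * B)ᵀ *
      exp (t • (Ts * Ssᵀ * A)ᵀ)) =
      fun t : ℝ => Ts * (exp (t • (Ssᵀ * A * Ts)) * (Ssᵀ * B) * (Ssᵀ * B)ᵀ *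
        exp (t • (Ssᵀ * A * Ts)ᵀ)) * Tsᵀ := funext key
  let L : Matrix (Fin ns) (Fin ns) ℝ →L[ℝ] Matrix (Fin n) (Fin n) ℝ :=
    LinearMap.toContinuousLinearMap
    { toFun := fun X => Ts * X * Tsᵀ
      map_add' := fun x y => by simp [Matrix.mul_add, Matrix.add_mul]
      map_smul' := fun r x => by simp [Matrix.mul_smul, Matrix.smul_mul] }
  have hLdef : ∀ X, L X = Ts * X * Tsᵀ := fun X => rfl
  have hint2 := L.integrable_comp hint
  constructor
  · rw [hfun]; exact hint2
  · rw [hfun]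
    have := L.integral_comp_comm hint
    exact this
end

section
/- Let T be an invertible real n×n matrix written in block form T = [T_u T_s] with T_u of size n×n_u and T_s of size n×n_s (n = n_u + n_s), and let its inverse be written T⁻¹ = [S_uᵀ ; S_sᵀ] with S_u of size n×n_u and S_s of size n×n_s; hence S_uᵀ T_u = I, S_sᵀ T_s = I, S_uᵀ T_s = 0, S_sᵀ T_u = 0. Let W_c^u, W_o^u be n_u×n_u matrices and W_c^s, W_o^s be n_s×n_s matrices, and suppose there are invertible matrices Φ̃_u (n_u×n_u) and Φ̃_s (n_s×n_s) and matrices Σ_u, Σ_s with Φ̃_u⁻¹ W_c^u Φ̃_u⁻ᵀ = Φ̃_uᵀ W_o^u Φ̃_u = Σ_u and Φ̃_s⁻¹ W_c^s Φ̃_s⁻ᵀ = Φ̃_sᵀ W_o^s Φ̃_s = Σ_s. Define the Gramians of the original system by W_c = T_u W_c^u T_uᵀ + T_s W_c^s T_sᵀ and W_o = S_u W_o^u S_uᵀ + S_s W_o^s S_sᵀ, and define Φ = [T_u Φ̃_u T_s Φ̃_s]. Then Φ is invertible with Φ⁻¹ = [Φ̃_u⁻¹ S_uᵀ ; Φ̃_s⁻¹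 S_sᵀ], and Φ balances the Gramians: Φ⁻¹ W_c Φ⁻ᵀ = Φᵀ W_o Φ = fromBlocks Σ_u 0 0 Σ_s (the block-diagonal matrix with blocks Σ_u and Σ_s). -/
open Matrix

/-- The balancing transformation of the full system splits into separate balancing
transformations of the unstable- and stable-subspace dynamics: if `T = [T_u T_s]` is
invertible with inverse `[S_uᵀ ; S_sᵀ]`, and `Φ̃_u`, `Φ̃_s` balance the sub-system
Gramians, then `Φ = [T_u Φ̃_u  T_s Φ̃_s]` is invertible with inverse
`[Φ̃_u⁻¹ S_uᵀ ; Φ̃_s⁻¹ S_sᵀ]` and balances the Gramians of the full system. -/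
theorem balancing_transformation_decouples
    {n nu ns : ℕ}
    (Tu Su : Matrix (Fin n) (Fin nu) ℝ) (Ts Ss : Matrix (Fin n) (Fin ns) ℝ)
    -- `T = [T_u T_s]` is invertible with inverse `[S_uᵀ ; S_sᵀ]`:
    (hTinv_left : Suᵀ * Tu = 1) (hTinv_left' : Ssᵀ * Ts = 1)
    (hcross : Suᵀ * Ts = 0) (hcross' : Ssᵀ * Tu = 0)
    (hTinv_right : Tu * Suᵀ + Ts * Ssᵀ = 1)
    (Wcu Wou Sigu : Matrix (Fin nu) (Fin nu) ℝ)
    (Wcs Wos Sigs : Matrix (Fin ns) (Fin ns) ℝ)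
    (Φu : Matrix (Fin nu) (Fin nu) ℝ) (hΦu : IsUnit Φu.det)
    (Φs : Matrix (Fin ns) (Fin ns) ℝ) (hΦs : IsUnit Φs.det)
    (hbal_u_c : Φu⁻¹ * Wcu * (Φu⁻¹)ᵀ = Sigu) (hbal_u_o : Φuᵀ * Wou * Φu = Sigu)
    (hbal_s_c : Φs⁻¹ * Wcs * (Φs⁻¹)ᵀ = Sigs) (hbal_s_o : Φsᵀ * Wos * Φs = Sigs) :
    (fromRows (Φu⁻¹ * Suᵀ) (Φs⁻¹ * Ssᵀ)) * (fromCols (Tu * Φu) (Ts * Φs)) = 1 ∧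
    (fromCols (Tu * Φu) (Ts * Φs)) * (fromRows (Φu⁻¹ * Suᵀ) (Φs⁻¹ * Ssᵀ)) = 1 ∧
    (fromRows (Φu⁻¹ * Suᵀ) (Φs⁻¹ * Ssᵀ)) * (Tu * Wcu * Tuᵀ + Ts * Wcs * Tsᵀ) *
        (fromRows (Φu⁻¹ * Suᵀ) (Φs⁻¹ * Ssᵀ))ᵀ = fromBlocks Sigu 0 0 Sigs ∧
    (fromCols (Tu * Φu) (Ts * Φs))ᵀ * (Su * Wou * Suᵀ + Ss * Wos * Ssᵀ) *
        (fromCols (Tu * Φu) (Ts * Φs)) = fromBlocks Sigu 0 0 Sigs := by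
  have h1 : ∀ {k} (X : Matrix (Fin nu) (Fin k) ℝ), Suᵀ * (Tu * X) = X := fun X => by
    rw [← Matrix.mul_assoc, hTinv_left, Matrix.one_mul]
  have h2 : ∀ {k} (X : Matrix (Fin ns) (Fin k) ℝ), Ssᵀ * (Ts * X) = X := fun X => by
    rw [← Matrix.mul_assoc, hTinv_left', Matrix.one_mul]
  have h3 : ∀ {k} (X : Matrix (Fin ns) (Fin k) ℝ), Suᵀ * (Ts * X) = 0 := fun X => by
    rw [← Matrix.mul_assoc, hcross, Matrix.zero_mul]
  have h4 : ∀ {k} (X : Matrix (Fin nu) (Fin k) ℝ), Ssᵀ * (Tu * X) = 0 := fun X => by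
    rw [← Matrix.mul_assoc, hcross', Matrix.zero_mul]
  have t1 : Tuᵀ * Su = 1 := by simpa using congrArg Matrix.transpose hTinv_left
  have t2 : Tsᵀ * Ss = 1 := by simpa using congrArg Matrix.transpose hTinv_left'
  have t3 : Tsᵀ * Su = 0 := by simpa using congrArg Matrix.transpose hcross
  have t4 : Tuᵀ * Ss = 0 := by simpa using congrArg Matrix.transpose hcross'
  have h5 : ∀ {k} (X : Matrix (Fin nu) (Fin k) ℝ), Tuᵀ * (Su * X) = X := fun X => by
    rw [← Matrix.mul_assoc, t1, Matrix.one_mul]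
  have h6 : ∀ {k} (X : Matrix (Fin ns) (Fin k) ℝ), Tsᵀ * (Ss * X) = X := fun X => by
    rw [← Matrix.mul_assoc, t2, Matrix.one_mul]
  have h7 : ∀ {k} (X : Matrix (Fin nu) (Fin k) ℝ), Tsᵀ * (Su * X) = 0 := fun X => by
    rw [← Matrix.mul_assoc, t3, Matrix.zero_mul]
  have h8 : ∀ {k} (X : Matrix (Fin ns) (Fin k) ℝ), Tuᵀ * (Ss * X) = 0 := fun X => by
    rw [← Matrix.mul_assoc, t4, Matrix.zero_mul]
  have hui : ∀ {k} (X : Matrix (Fin nu) (Fin k) ℝ), Φu⁻¹ * (Φu * X) = X := fun X => by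
    rw [← Matrix.mul_assoc, Matrix.nonsing_inv_mul _ hΦu, Matrix.one_mul]
  have hsi : ∀ {k} (X : Matrix (Fin ns) (Fin k) ℝ), Φs⁻¹ * (Φs * X) = X := fun X => by
    rw [← Matrix.mul_assoc, Matrix.nonsing_inv_mul _ hΦs, Matrix.one_mul]
  have hui' : ∀ {k} (X : Matrix (Fin nu) (Fin k) ℝ), Φu * (Φu⁻¹ * X) = X := fun X => by
    rw [← Matrix.mul_assoc, Matrix.mul_nonsing_inv _ hΦu, Matrix.one_mul]
  have hsi' : ∀ {k} (X : Matrix (Fin ns) (Fin k) ℝ), Φs * (Φs⁻¹ * X) = X := fun X => by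
    rw [← Matrix.mul_assoc, Matrix.mul_nonsing_inv _ hΦs, Matrix.one_mul]
  have bu : Φu⁻¹ * (Wcu * (Φu⁻¹)ᵀ) = Sigu := by rw [← Matrix.mul_assoc, hbal_u_c]
  have bs : Φs⁻¹ * (Wcs * (Φs⁻¹)ᵀ) = Sigs := by rw [← Matrix.mul_assoc, hbal_s_c]
  have ou : Φuᵀ * (Wou * Φu) = Sigu := by rw [← Matrix.mul_assoc, hbal_u_o]
  have os : Φsᵀ * (Wos * Φs) = Sigs := by rw [← Matrix.mul_assoc, hbal_s_o]
  refine ⟨?_, ?_, ?_, ?_⟩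
  · rw [fromRows_mul_fromCols]
    have e11 : Φu⁻¹ * Suᵀ * (Tu * Φu) = 1 := by
      rw [Matrix.mul_assoc, h1, Matrix.nonsing_inv_mul _ hΦu]
    have e12 : Φu⁻¹ * Suᵀ * (Ts * Φs) = 0 := by
      rw [Matrix.mul_assoc, h3, Matrix.mul_zero]
    have e21 : Φs⁻¹ * Ssᵀ * (Tu * Φu) = 0 := by
      rw [Matrix.mul_assoc, h4, Matrix.mul_zero]
    have e22 : Φs⁻¹ * Ssᵀ * (Ts * Φs) = 1 := by
      rw [Matrix.mul_assoc, h2, Matrix.nonsing_inv_mul _ hΦs]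
    rw [e11, e12, e21, e22, fromBlocks_one]
  · rw [fromCols_mul_fromRows, Matrix.mul_assoc, hui', Matrix.mul_assoc, hsi', hTinv_right]
  · rw [transpose_fromRows, fromRows_mul, fromRows_mul_fromCols]
    simp only [Matrix.transpose_mul, Matrix.transpose_transpose]
    have e11 : Φu⁻¹ * Suᵀ * (Tu * Wcu * Tuᵀ + Ts * Wcs * Tsᵀ) * (Su * (Φu⁻¹)ᵀ) = Sigu := by
      simp only [Matrix.mul_add, Matrix.add_mul, Matrix.mul_assoc, h1, h2, h3, h4, h5, h6,
        h7, h8, Matrix.mul_zero, Matrix.zero_mul, add_zero, zero_add, bu, bs]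
    have e12 : Φu⁻¹ * Suᵀ * (Tu * Wcu * Tuᵀ + Ts * Wcs * Tsᵀ) * (Ss * (Φs⁻¹)ᵀ) = 0 := by
      simp only [Matrix.mul_add, Matrix.add_mul, Matrix.mul_assoc, h1, h2, h3, h4, h5, h6,
        h7, h8, Matrix.mul_zero, Matrix.zero_mul, add_zero, zero_add]
    have e21 : Φs⁻¹ * Ssᵀ * (Tu * Wcu * Tuᵀ + Ts * Wcs * Tsᵀ) * (Su * (Φu⁻¹)ᵀ) = 0 := by
      simp only [Matrix.mul_add, Matrix.add_mul, Matrix.mul_assoc, h1, h2, h3, h4, h5, h6,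
        h7, h8, Matrix.mul_zero, Matrix.zero_mul, add_zero, zero_add]
    have e22 : Φs⁻¹ * Ssᵀ * (Tu * Wcu * Tuᵀ + Ts * Wcs * Tsᵀ) * (Ss * (Φs⁻¹)ᵀ) = Sigs := by
      simp only [Matrix.mul_add, Matrix.add_mul, Matrix.mul_assoc, h1, h2, h3, h4, h5, h6,
        h7, h8, Matrix.mul_zero, Matrix.zero_mul, add_zero, zero_add, bu, bs]
    rw [e11, e12, e21, e22]
  · rw [transpose_fromCols, Matrix.transpose_mul, Matrix.transpose_mul,
      fromRows_mul, fromRows_mul_fromCols]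
    have e11 : Φuᵀ * Tuᵀ * (Su * Wou * Suᵀ + Ss * Wos * Ssᵀ) * (Tu * Φu) = Sigu := by
      simp only [Matrix.mul_add, Matrix.add_mul, Matrix.mul_assoc, h1, h2, h3, h4, h5, h6,
        h7, h8, Matrix.mul_zero, Matrix.zero_mul, add_zero, zero_add, ou, os]
    have e12 : Φuᵀ * Tuᵀ * (Su * Wou * Suᵀ + Ss * Wos * Ssᵀ) * (Ts * Φs) = 0 := by
      simp only [Matrix.mul_add, Matrix.add_mul, Matrix.mul_assoc, h1, h2, h3, h4, h5, h6,
        h7, h8, Matrix.mul_zero, Matrix.zero_mul, add_zero, zero_add]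
    have e21 : Φsᵀ * Tsᵀ * (Su * Wou * Suᵀ + Ss * Wos * Ssᵀ) * (Tu * Φu) = 0 := by
      simp only [Matrix.mul_add, Matrix.add_mul, Matrix.mul_assoc, h1, h2, h3, h4, h5, h6,
        h7, h8, Matrix.mul_zero, Matrix.zero_mul, add_zero, zero_add]
    have e22 : Φsᵀ * Tsᵀ * (Su * Wou * Suᵀ + Ss * Wos * Ssᵀ) * (Ts * Φs) = Sigs := by
      simp only [Matrix.mul_add, Matrix.add_mul, Matrix.mul_assoc, h1, h2, h3, h4, h5, h6,
        h7, h8, Matrix.mul_zero, Matrix.zero_mul, add_zero, zero_add, ou, os]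
    rw [e11, e12, e21, e22]
end
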